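/- On finitely supported closed coeffect contexts, define Γ + Δ := (Γ ∪̂ Δ)⋆ and X × Γ := (X ◁̂ Γ)⋆, where ∪̂ is pointwise union and (X ◁̂ Γ) y = X ◁ (Γ y). Then these operations make the finitely supported closed contexts a module over the semiring 𝓛 of sharing coeffects: for all finite link sets X, Y and all finitely supported closed contexts Γ, Δ one has (X ∪ Y) × Γ = (X × Γ) + (Y × Γ), X × (Γ + Δ) = (X × Γ) + (X × Δ), (X ◁ Y) × Γ = X × (Y × Γ), ∅ × Γ = 0, X × 0 = 0, and {res} × Γ = Γ, where 0 is the everywhere-∅ context; moreover × is monotone in both arguments (with respect to ⊆ on Finset L and ⊆̂ on contexts). -/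

import Mathlib

/-- The operation `X ◁ Y` on sharing coeffects: it is `∅` if `X = ∅`, it is `Y`
if `X ≠ ∅` and `res ∉ Y`, and it is `(Y \ {res}) ∪ X` if `X ≠ ∅` and `res ∈ Y`. -/
def tri {L : Type*} [DecidableEq L] (res : L) (X Y : Finset L) : Finset L :=
  if X = ∅ then ∅ else if res ∈ Y then (Y \ {res}) ∪ X else Y

/-- A coeffect context `γ : V → Finset L` is closed if whenever `ℓ` and `ℓ'`
are both links of `x` and `ℓ'` is a link of `y`, then `ℓ` is a link of `y`. -/
def IsClosedCtx {V L : Type*} (γ : V → Finset L) : Prop :=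
  ∀ (x y : V) (ℓ ℓ' : L), ℓ ∈ γ x → ℓ' ∈ γ x → ℓ' ∈ γ y → ℓ ∈ γ y

/-- A coeffect context is finitely supported if only finitely many variables
have a non-empty coeffect. -/
def IsFinSupported {V L : Type*} (γ : V → Finset L) : Prop :=
  {x : V | γ x ≠ ∅}.Finite

/-- `γs` is the closure of `γ`: the pointwise-least closed context containing `γ`. -/
def IsClosure {V L : Type*} (γ γs : V → Finset L) : Prop :=
  IsClosedCtx γs ∧ (∀ x : V, γ x ⊆ γs x) ∧
    ∀ δ : V → Finset L, IsClosedCtx δ → (∀ x : V, γ x ⊆ δ x) → ∀ x : V, γs x ⊆ δ x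

/-- The sum of two contexts: the closure (computed by `star`) of the pointwise union. -/
def ctxAdd {V L : Type*} [DecidableEq L] (star : (V → Finset L) → (V → Finset L))
    (Γ Δ : V → Finset L) : V → Finset L :=
  star (fun x => Γ x ∪ Δ x)

/-- Scalar multiplication of a context by a coeffect: the closure (computed by
`star`) of the pointwise application of `◁`. -/
def ctxSmul {V L : Type*} [DecidableEq L] (res : L)
    (star : (V → Finset L) → (V → Finset L))
    (X : Finset L) (Γ : V → Finset L) : V → Finset L :=
  star (fun y => tri res X (Γ y))

section
variable {L : Type*} [DecidableEq L] (res : L)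

lemma tri_empty_left (Y : Finset L) : tri res ∅ Y = ∅ := if_pos rfl

lemma tri_empty_right (X : Finset L) : tri res X ∅ = ∅ := by
  unfold tri; split_ifs with h1 h2 <;> simp_all

lemma tri_res (Y : Finset L) : tri res {res} Y = Y := by
  unfold tri; split_ifs with h1 h2
  · simp at h1
  · ext a; by_cases h : a = res <;> simp [h, h2]
  · rfl

lemma tri_mono_left {X Y : Finset L} (h : X ⊆ Y) (Z : Finset L) :
    tri res X Z ⊆ tri res Y Z := by
  unfold tri
  split_ifs <;>
    first
      | (simp_all [Finset.subset_empty]; done)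
      | (intro a ha; by_cases hr : a = res <;> simp_all <;> tauto)

lemma tri_mono_right {Y Z : Finset L} (X : Finset L) (h : Y ⊆ Z) :
    tri res X Y ⊆ tri res X Z := by
  unfold tri
  split_ifs <;>
    first
      | (simp_all [Finset.subset_empty]; done)
      | (intro a ha; by_cases hr : a = res <;> simp_all <;> tauto)

lemma tri_union_left (X Y Z : Finset L) :
    tri res (X ∪ Y) Z = tri res X Z ∪ tri res Y Z := by
  unfold tri
  split_ifs <;>
    first
      | rfl
      | (simp_all [Finset.union_eq_empty]; done)
      | (ext a; simp only [Finset.mem_union, Finset.mem_sdiff, Finset.mem_singleton];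
         by_cases hr : a = res <;>
           first | (subst hr; tauto) | (simp only [hr, or_false, and_true, not_false_iff]; tauto))

lemma tri_union_right (X A B : Finset L) :
    tri res X (A ∪ B) = tri res X A ∪ tri res X B := by
  unfold tri
  split_ifs <;>
    first
      | rfl
      | (simp_all [Finset.union_eq_empty]; done)
      | (ext a; simp only [Finset.mem_union, Finset.mem_sdiff, Finset.mem_singleton];
         by_cases hr : a = res <;>
           first | (subst hr; tauto) | (simp only [hr, or_false, and_true, not_false_iff]; tauto))

lemma tri_assoc (X Y Z : Finset L) :
    tri res (tri res X Y) Z = tri res X (tri res Y Z) := by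
  unfold tri
  split_ifs <;>
    first
      | rfl
      | (simp_all [Finset.union_eq_empty]; done)
      | (ext a; simp only [Finset.mem_union, Finset.mem_sdiff, Finset.mem_singleton];
         by_cases hr : a = res <;>
           first | (subst hr; tauto) | (simp only [hr, or_false, and_true, not_false_iff]; tauto))

end

section
variable {L V : Type*} [DecidableEq L] {res : L}

/-- support monotone ⇒ finsupp -/
lemma finsupp_of_imp {γ δ : V → Finset L} (h : IsFinSupported δ)
    (himp : ∀ x, γ x ≠ ∅ → δ x ≠ ∅) : IsFinSupported γ :=
  h.subset fun x hx => himp x hx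

lemma finsupp_tri {Γ : V → Finset L} (h : IsFinSupported Γ) (X : Finset L) :
    IsFinSupported (fun y => tri res X (Γ y)) := by
  refine finsupp_of_imp h fun x hx hΓ => hx ?_
  simp [tri, hΓ]

lemma finsupp_union {Γ Δ : V → Finset L} (hΓ : IsFinSupported Γ)
    (hΔ : IsFinSupported Δ) : IsFinSupported (fun x => Γ x ∪ Δ x) := by
  refine ((hΓ.union hΔ).subset ?_)
  intro x hx
  by_cases h1 : Γ x = ∅
  · right
    simp only [Set.mem_setOf_eq]
    intro h2
    exact hx (by simp [h1, h2])
  · left; exact h1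

lemma finsupp_zero : IsFinSupported (fun _ : V => (∅ : Finset L)) := by
  simp [IsFinSupported]

lemma closed_zero : IsClosedCtx (fun _ : V => (∅ : Finset L)) := by
  intro x y ℓ ℓ' h; simp at h

variable (star : (V → Finset L) → (V → Finset L))
variable (hstar : ∀ γ : V → Finset L, IsFinSupported γ → IsClosure γ (star γ))

include hstar

/-- star γ is finitely supported -/
lemma star_finsupp {γ : V → Finset L} (hγ : IsFinSupported γ) :
    IsFinSupported (star γ) := by
  classical
  set U : Finset L := hγ.toFinset.sup γ with hU
  set δ0 : V → Finset L := fun x => if γ x = ∅ then ∅ else U with hδ0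
  have hclosed : IsClosedCtx δ0 := by
    intro x y ℓ ℓ' h1 h2 h3
    by_cases hy : γ y = ∅
    · simp [hδ0, hy] at h3
    · by_cases hx : γ x = ∅
      · simp [hδ0, hx] at h1
      · simp only [hδ0, if_neg hx] at h1
        simpa [hδ0, if_neg hy] using h1
  have hle : ∀ x, γ x ⊆ δ0 x := by
    intro x a ha
    have hne : γ x ≠ ∅ := by intro h; rw [h] at ha; exact absurd ha (by simp)
    simp only [hδ0, if_neg hne]
    exact Finset.le_sup (f := γ) ((Set.Finite.mem_toFinset hγ).mpr hne) ha
  have := (hstar γ hγ).2.2 δ0 hclosed hle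
  refine finsupp_of_imp hγ fun x hx => ?_
  intro hγx
  apply hx
  have : star γ x ⊆ δ0 x := this x
  rw [hδ0] at this
  simp only [hγx, if_pos] at this
  exact Finset.subset_empty.mp (by simpa using this) |>.symm ▸ rfl

lemma star_le {γ δ : V → Finset L} (hγ : IsFinSupported γ) (hδ : IsClosedCtx δ)
    (h : ∀ x, γ x ⊆ δ x) : ∀ x, star γ x ⊆ δ x :=
  (hstar γ hγ).2.2 δ hδ h

lemma le_star {γ : V → Finset L} (hγ : IsFinSupported γ) : ∀ x, γ x ⊆ star γ x :=
  (hstar γ hγ).2.1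

lemma star_closed {γ : V → Finset L} (hγ : IsFinSupported γ) : IsClosedCtx (star γ) :=
  (hstar γ hγ).1

lemma star_of_closed {γ : V → Finset L} (hγ : IsFinSupported γ) (hc : IsClosedCtx γ) :
    star γ = γ := by
  funext x
  exact Finset.Subset.antisymm (star_le star hstar hγ hc (fun _ => Finset.Subset.refl _) x)
    (le_star star hstar hγ x)

lemma star_mono {γ δ : V → Finset L} (hγ : IsFinSupported γ) (hδ : IsFinSupported δ)
    (h : ∀ x, γ x ⊆ δ x) : ∀ x, star γ x ⊆ star δ x :=
  star_le star hstar hγ (star_closed star hstar hδ)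
    (fun x => (h x).trans (le_star star hstar hδ x))

lemma star_union_star {γ δ : V → Finset L} (hγ : IsFinSupported γ)
    (hδ : IsFinSupported δ) :
    star (fun x => star γ x ∪ star δ x) = star (fun x => γ x ∪ δ x) := by
  have hu : IsFinSupported (fun x => γ x ∪ δ x) := finsupp_union hγ hδ
  have hsu : IsFinSupported (fun x => star γ x ∪ star δ x) :=
    finsupp_union (star_finsupp star hstar hγ) (star_finsupp star hstar hδ)
  funext x
  apply Finset.Subset.antisymm
  · refine star_le star hstar hsu (star_closed star hstar hu) (fun y => ?_) x
    apply Finset.union_subset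
    · exact star_mono star hstar hγ hu (fun z => Finset.subset_union_left) y
    · exact star_mono star hstar hδ hu (fun z => Finset.subset_union_right) y
  · refine star_le star hstar hu (star_closed star hstar hsu) (fun y => ?_) x
    refine Finset.union_subset ?_ ?_
    · intro a ha
      exact le_star star hstar hsu y
        (Finset.mem_union_left _ (le_star star hstar hγ y ha))
    · intro a ha
      exact le_star star hstar hsu y
        (Finset.mem_union_right _ (le_star star hstar hδ y ha))

/-- KEY: applying tri to the closure stays inside the closure of tri. -/
lemma tri_star_le {X : Finset L} (hX : X ≠ ∅) {δ : V → Finset L}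
    (hδ : IsFinSupported δ) :
    ∀ y, tri res X (star δ y) ⊆ star (fun y => tri res X (δ y)) y := by
  classical
  set E : V → Finset L := star (fun y => tri res X (δ y)) with hE
  have hTfin : IsFinSupported (fun y => tri res X (δ y)) := finsupp_tri hδ X
  have hEclosed : IsClosedCtx E := star_closed star hstar hTfin
  have hTleE : ∀ y, tri res X (δ y) ⊆ E y := le_star star hstar hTfin
  have hEfin : IsFinSupported E := star_finsupp star hstar hTfin
  -- the "substitution image" of a link
  set f : L → Finset L := fun a => if a = res then X else {a} with hf
  have hfne : ∀ a, f a ≠ ∅ := by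
    intro a; by_cases h : a = res <;> simp [hf, h, hX]
  -- the inverse-substitution context
  set ρ : V → Finset L := fun y =>
    (E y \ {res}) ∪ (if X ⊆ E y then {res} else ∅) with hρ
  have mem_ρ : ∀ a y, a ∈ ρ y ↔ f a ⊆ E y := by
    intro a y
    by_cases h : a = res
    · subst h
      simp only [hρ, hf, Finset.mem_union, Finset.mem_sdiff, Finset.mem_singleton,
        if_pos rfl]
      constructor
      · rintro (⟨_, h2⟩ | h1)
        · simp at h2
        · split_ifs at h1 with hXE
          · exact hXE
          · simp at h1
      · intro h1; right; simp [if_pos h1]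
    · simp only [hρ, hf, if_neg h, Finset.mem_union, Finset.mem_sdiff,
        Finset.mem_singleton, Finset.singleton_subset_iff]
      constructor
      · rintro (⟨h1, _⟩ | h1)
        · exact h1
        · split_ifs at h1 with hXE <;> simp at h1
          exact absurd h1 h
      · intro h1; left; exact ⟨h1, h⟩
  have hρclosed : IsClosedCtx ρ := by
    intro x y ℓ ℓ' h1 h2 h3
    rw [mem_ρ] at h1 h2 h3 ⊢
    obtain ⟨c', hc'⟩ := Finset.nonempty_iff_ne_empty.mpr (hfne ℓ')
    intro c hc
    exact hEclosed x y c c' (h1 hc) (h2 hc') (h3 hc')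
  have hδleρ : ∀ y, δ y ⊆ ρ y := by
    intro y a ha
    rw [mem_ρ]
    intro c hc
    apply hTleE y
    by_cases h : a = res
    · subst h
      simp only [hf, if_pos rfl] at hc
      simp [tri, hX, ha, hc]
    · simp only [hf, if_neg h, Finset.mem_singleton] at hc
      subst hc
      by_cases hr : res ∈ δ y <;> simp [tri, hX, hr, ha, h]
  have hρfin : IsFinSupported ρ := by
    refine finsupp_of_imp hEfin fun y hy hEy => hy ?_
    simp only [hρ, hEy]
    rw [if_neg (by simpa [Finset.subset_empty] using hX)]
    simp
  have hSleρ : ∀ y, star δ y ⊆ ρ y := star_le star hstar hδ hρclosed hδleρ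
  -- conclude
  intro y a ha
  rw [tri] at ha
  rw [if_neg hX] at ha
  by_cases hr : res ∈ star δ y
  · rw [if_pos hr] at ha
    rcases Finset.mem_union.mp ha with h | h
    · obtain ⟨h1, h2⟩ := Finset.mem_sdiff.mp h
      have := (mem_ρ a y).mp (hSleρ y h1)
      simp only [hf, if_neg (Finset.notMem_singleton.mp h2)] at this
      exact this (Finset.mem_singleton_self a)
    · have := (mem_ρ res y).mp (hSleρ y hr)
      simp only [hf, if_pos rfl] at this
      exact this h
  · rw [if_neg hr] at ha
    have hne : a ≠ res := fun h => hr (h ▸ ha)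
    have := (mem_ρ a y).mp (hSleρ y ha)
    simp only [hf, if_neg hne] at this
    exact this (Finset.mem_singleton_self a)

/-- smul of a closure equals smul of the original. -/
lemma star_tri_star {X : Finset L} {δ : V → Finset L} (hδ : IsFinSupported δ) :
    star (fun y => tri res X (star δ y)) = star (fun y => tri res X (δ y)) := by
  by_cases hX : X = ∅
  · subst hX
    have h1 : (fun y => tri res (∅ : Finset L) (star δ y)) = fun y => tri res ∅ (δ y) := by
      funext y; simp [tri]
    rw [h1]
  · have hTfin : IsFinSupported (fun y => tri res X (δ y)) := finsupp_tri hδ X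
    have hSfin : IsFinSupported (star δ) := star_finsupp star hstar hδ
    have hTSfin : IsFinSupported (fun y => tri res X (star δ y)) := finsupp_tri hSfin X
    funext y
    apply Finset.Subset.antisymm
    · exact star_le star hstar hTSfin (star_closed star hstar hTfin)
        (tri_star_le star hstar hX hδ) y
    · refine star_mono star hstar hTfin hTSfin (fun z => ?_) y
      exact tri_mono_right res X (le_star star hstar hδ z)
end


/-- the finitely supported closed coeffect contexts, with
`Γ + Δ := (Γ ∪̂ Δ)⋆` and `X × Γ := (X ◁̂ Γ)⋆`, form a module over the semiring
`𝓛` of sharing coeffects, with `×` monotone in both arguments. -/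
theorem closed_ctxs_module {L V : Type*} [DecidableEq L] (res : L)
    (star : (V → Finset L) → (V → Finset L))
    (hstar : ∀ γ : V → Finset L, IsFinSupported γ → IsClosure γ (star γ)) :
    -- (X ∪ Y) × Γ = (X × Γ) + (Y × Γ)
    (∀ (X Y : Finset L) (Γ : V → Finset L), IsFinSupported Γ → IsClosedCtx Γ →
        ctxSmul res star (X ∪ Y) Γ =
          ctxAdd star (ctxSmul res star X Γ) (ctxSmul res star Y Γ)) ∧
    -- X × (Γ + Δ) = (X × Γ) + (X × Δ)
    (∀ (X : Finset L) (Γ Δ : V → Finset L), IsFinSupported Γ → IsClosedCtx Γ →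
        IsFinSupported Δ → IsClosedCtx Δ →
        ctxSmul res star X (ctxAdd star Γ Δ) =
          ctxAdd star (ctxSmul res star X Γ) (ctxSmul res star X Δ)) ∧
    -- (X ◁ Y) × Γ = X × (Y × Γ)
    (∀ (X Y : Finset L) (Γ : V → Finset L), IsFinSupported Γ → IsClosedCtx Γ →
        ctxSmul res star (tri res X Y) Γ =
          ctxSmul res star X (ctxSmul res star Y Γ)) ∧
    -- ∅ × Γ = 0
    (∀ Γ : V → Finset L, IsFinSupported Γ → IsClosedCtx Γ →
        ctxSmul res star ∅ Γ = fun _ => ∅) ∧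
    -- X × 0 = 0
    (∀ X : Finset L, ctxSmul res star X (fun _ => ∅) = fun _ => ∅) ∧
    -- {res} × Γ = Γ
    (∀ Γ : V → Finset L, IsFinSupported Γ → IsClosedCtx Γ →
        ctxSmul res star {res} Γ = Γ) ∧
    -- monotonicity in the scalar argument
    (∀ (X Y : Finset L) (Γ : V → Finset L), IsFinSupported Γ → IsClosedCtx Γ →
        X ⊆ Y → ∀ x : V, ctxSmul res star X Γ x ⊆ ctxSmul res star Y Γ x) ∧
    -- monotonicity in the context argument
    (∀ (X : Finset L) (Γ Δ : V → Finset L), IsFinSupported Γ → IsClosedCtx Γ →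
        IsFinSupported Δ → IsClosedCtx Δ → (∀ x : V, Γ x ⊆ Δ x) →
        ∀ x : V, ctxSmul res star X Γ x ⊆ ctxSmul res star X Δ x) := by

  classical
  refine ⟨?_, ?_, ?_, ?_, ?_, ?_, ?_, ?_⟩
  · intro X Y Γ hfin hcl
    unfold ctxSmul ctxAdd
    have h1 : (fun y => tri res (X ∪ Y) (Γ y)) =
        fun y => tri res X (Γ y) ∪ tri res Y (Γ y) :=
      funext fun y => tri_union_left res X Y (Γ y)
    rw [h1, ← star_union_star star hstar (finsupp_tri hfin X) (finsupp_tri hfin Y)]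
  · intro X Γ Δ hΓ hΓc hΔ hΔc
    unfold ctxSmul ctxAdd
    have hu : IsFinSupported (fun x => Γ x ∪ Δ x) := finsupp_union hΓ hΔ
    rw [star_tri_star star hstar hu]
    have h2 : (fun y => tri res X (Γ y ∪ Δ y)) =
        fun y => tri res X (Γ y) ∪ tri res X (Δ y) :=
      funext fun y => tri_union_right res X (Γ y) (Δ y)
    rw [h2, ← star_union_star star hstar (finsupp_tri hΓ X) (finsupp_tri hΔ X)]
  · intro X Y Γ hfin hcl
    unfold ctxSmul
    have h1 : (fun y => tri res (tri res X Y) (Γ y)) =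
        fun y => tri res X (tri res Y (Γ y)) :=
      funext fun y => tri_assoc res X Y (Γ y)
    rw [h1, ← star_tri_star star hstar (finsupp_tri hfin Y)]
  · intro Γ hfin hcl
    unfold ctxSmul
    have h1 : (fun y => tri res ∅ (Γ y)) = fun _ : V => (∅ : Finset L) :=
      funext fun y => tri_empty_left res (Γ y)
    rw [h1, star_of_closed star hstar finsupp_zero closed_zero]
  · intro X
    unfold ctxSmul
    have h1 : (fun _ : V => tri res X ∅) = fun _ : V => (∅ : Finset L) :=
      funext fun _ => tri_empty_right res X
    rw [h1, star_of_closed star hstar finsupp_zero closed_zero]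
  · intro Γ hfin hcl
    unfold ctxSmul
    have h1 : (fun y => tri res {res} (Γ y)) = Γ :=
      funext fun y => tri_res res (Γ y)
    rw [h1, star_of_closed star hstar hfin hcl]
  · intro X Y Γ hfin hcl hXY x
    exact star_mono star hstar (finsupp_tri hfin X) (finsupp_tri hfin Y)
      (fun y => tri_mono_left res hXY (Γ y)) x
  · intro X Γ Δ hΓ hΓc hΔ hΔc h x
    exact star_mono star hstar (finsupp_tri hΓ X) (finsupp_tri hΔ X)
      (fun y => tri_mono_right res X (h y)) x
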